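/- Cleaning Lemma for stabilizer codes: Let P = F_2^{2n} be the symplectic vector space of n-qubit Pauli operators and S ≤ P a self-orthogonal (isotropic) subspace, i.e. S ≤ S^⊥, with k = n − dim S. For any partition of the qubits into M and M^c, define g(M) = dim(S^⊥ ∩ P_M) − dim(S ∩ P_M). Then g(M) + g(M^c) = 2k. -/

import Mathlib

open Module

lemma orth_sup {K V : Type*} [Field K] [AddCommGroup V] [Module K V]
    (B : LinearMap.BilinForm K V) (A C : Submodule K V) :
    B.orthogonal (A ⊔ C) = B.orthogonal A ⊓ B.orthogonal C := by
  ext x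
  simp only [LinearMap.BilinForm.mem_orthogonal_iff, Submodule.mem_inf]
  constructor
  · exact fun h => ⟨fun y hy => h y (Submodule.mem_sup_left hy),
      fun y hy => h y (Submodule.mem_sup_right hy)⟩
  · rintro ⟨h1, h2⟩ y hy
    obtain ⟨a, ha, c, hc, rfl⟩ := Submodule.mem_sup.mp hy
    show B (a + c) x = 0
    rw [LinearMap.BilinForm.add_left, h1 a ha, h2 c hc, add_zero]

/-- Cleaning Lemma for stabilizer codes: for an isotropic subspace `S ≤ S^⊥` of the
`2n`-dimensional symplectic space over `F_2` with `k = n − dim S`, and a partition of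
the qubits inducing `P = P_M ⊕ P_{M^c}`, one has `g(M) + g(M^c) = 2k` where
`g(M) = dim(S^⊥ ⊓ P_M) − dim(S ⊓ P_M)`. -/
theorem stmt5 (P : Type*) [AddCommGroup P] [Module (ZMod 2) P]
    [FiniteDimensional (ZMod 2) P]
    (n m mc : ℕ) (hn : n = m + mc) (hP : finrank (ZMod 2) P = 2 * n)
    (Φ : LinearMap.BilinForm (ZMod 2) P) (hnd : Φ.Nondegenerate) (halt : Φ.IsAlt)
    (PM PMc : Submodule (ZMod 2) P) (hMMc : IsCompl PM PMc)
    (hperpM : Φ.orthogonal PM = PMc) (hperpMc : Φ.orthogonal PMc = PM)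
    (hdimM : finrank (ZMod 2) PM = 2 * m) (hdimMc : finrank (ZMod 2) PMc = 2 * mc)
    (S : Submodule (ZMod 2) P) (hiso : S ≤ Φ.orthogonal S)
    (k : ℕ) (hk : k + finrank (ZMod 2) S = n) :
    (finrank (ZMod 2) (Φ.orthogonal S ⊓ PM : Submodule (ZMod 2) P)
        - finrank (ZMod 2) (S ⊓ PM : Submodule (ZMod 2) P))
      + (finrank (ZMod 2) (Φ.orthogonal S ⊓ PMc : Submodule (ZMod 2) P)
        - finrank (ZMod 2) (S ⊓ PMc : Submodule (ZMod 2) P)) = 2 * k := by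
  have hrefl := halt.isRefl
  set T := Φ.orthogonal S with hT
  have hTT : Φ.orthogonal T = S := Φ.orthogonal_orthogonal hnd hrefl S
  have hdimT : finrank (ZMod 2) T = 2 * n - finrank (ZMod 2) S := by
    rw [hT, Φ.finrank_orthogonal hnd, hP]
  have hSle : finrank (ZMod 2) S ≤ 2 * n := hP ▸ Submodule.finrank_le S
  have e1 : Φ.orthogonal (T ⊔ PMc) = S ⊓ PM := by rw [orth_sup, hTT, hperpMc]
  have e2 : Φ.orthogonal (T ⊔ PM) = S ⊓ PMc := by rw [orth_sup, hTT, hperpM]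
  have d1 : finrank (ZMod 2) (S ⊓ PM : Submodule (ZMod 2) P)
      = 2 * n - finrank (ZMod 2) (T ⊔ PMc : Submodule (ZMod 2) P) := by
    rw [← e1, Φ.finrank_orthogonal hnd, hP]
  have d2 : finrank (ZMod 2) (S ⊓ PMc : Submodule (ZMod 2) P)
      = 2 * n - finrank (ZMod 2) (T ⊔ PM : Submodule (ZMod 2) P) := by
    rw [← e2, Φ.finrank_orthogonal hnd, hP]
  have s1 := Submodule.finrank_sup_add_finrank_inf_eq T PMc
  have s2 := Submodule.finrank_sup_add_finrank_inf_eq T PM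
  have m1 : finrank (ZMod 2) (S ⊓ PM : Submodule (ZMod 2) P)
      ≤ finrank (ZMod 2) (T ⊓ PM : Submodule (ZMod 2) P) :=
    Submodule.finrank_mono (inf_le_inf_right PM hiso)
  have m2 : finrank (ZMod 2) (S ⊓ PMc : Submodule (ZMod 2) P)
      ≤ finrank (ZMod 2) (T ⊓ PMc : Submodule (ZMod 2) P) :=
    Submodule.finrank_mono (inf_le_inf_right PMc hiso)
  have le1 : finrank (ZMod 2) (T ⊔ PMc : Submodule (ZMod 2) P) ≤ 2 * n :=
    hP ▸ Submodule.finrank_le _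
  have le2 : finrank (ZMod 2) (T ⊔ PM : Submodule (ZMod 2) P) ≤ 2 * n :=
    hP ▸ Submodule.finrank_le _
  omega
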